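/- For s > 2 and θ̄₂ ∈ (0, (s−2)π/s), define ĝ_s(θ̄₂) := [2(θ̄₂²(1+s) − (s−1)π²)·cot(θ̄₂/2) + θ̄₂(θ̄₂ − π)(θ̄₂(1+s) + π(1−s))·csc²(θ̄₂/2)]/(θ̄₂ − π)². Then ĝ_s is strictly decreasing on (0, (s−2)π/s] whenever (s−1)π/(s+1) > θ̄₂, i.e., ĝ_s'(θ̄₂) < 0 for θ̄₂ in (0, (s−2)π/s) with θ̄₂ < (s−1)π/(s+1). -/

import Mathlib

open Real

set_option maxHeartbeats 1000000

lemma nonneg_of_deriv' {f f' : ℝ → ℝ} (hd : ∀ x, HasDerivAt f (f' x) x)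
    (h0 : f 0 = 0) (hpos : ∀ x, 0 ≤ x → 0 ≤ f' x) {x : ℝ} (hx : 0 ≤ x) : 0 ≤ f x := by
  have hmono : MonotoneOn f (Set.Ici (0:ℝ)) := by
    apply monotoneOn_of_deriv_nonneg (convex_Ici 0)
    · exact fun y _ => (hd y).differentiableAt.continuousAt.continuousWithinAt
    · exact fun y _ => (hd y).differentiableAt.differentiableWithinAt
    · intro y hy
      rw [(hd y).deriv]
      exact hpos y (le_of_lt (by simpa using hy))
  have := hmono (Set.mem_Ici.2 le_rfl) (Set.mem_Ici.2 hx) hx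
  linarith [this]

lemma sin_ge_t3' {x : ℝ} (hx : 0 ≤ x) : x - x^3/6 ≤ sin x := by
  have h := nonneg_of_deriv' (f := fun x => sin x - (x - x^3/6))
    (f' := fun x => cos x - (1 - x^2/2)) (fun y => by
      have h' := (Real.hasDerivAt_sin y).sub ((hasDerivAt_id y).sub
          ((hasDerivAt_pow 3 y).div_const 6))
      refine h'.congr_deriv ?_
      push_cast; ring
    ) (by norm_num) (fun y _ => by nlinarith [Real.one_sub_sq_div_two_le_cos (x := y)]) hx
  linarith [h]

lemma cos_le_t4' {x : ℝ} (hx : 0 ≤ x) : cos x ≤ 1 - x^2/2 + x^4/24 := by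
  have h := nonneg_of_deriv' (f := fun x => 1 - x^2/2 + x^4/24 - cos x)
    (f' := fun x => -(x) + x^3/6 + sin x) (fun y => by
      have h' := (((hasDerivAt_const y (1:ℝ)).sub ((hasDerivAt_pow 2 y).div_const 2)).add
          ((hasDerivAt_pow 4 y).div_const 24)).sub (Real.hasDerivAt_cos y)
      refine h'.congr_deriv ?_
      push_cast; ring
    ) (by norm_num) (fun y hy => by nlinarith [sin_ge_t3' hy]) hx
  linarith [h]

lemma sin_le_t5' {x : ℝ} (hx : 0 ≤ x) : sin x ≤ x - x^3/6 + x^5/120 := by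
  have h := nonneg_of_deriv' (f := fun x => x - x^3/6 + x^5/120 - sin x)
    (f' := fun x => 1 - x^2/2 + x^4/24 - cos x) (fun y => by
      have h' := (((hasDerivAt_id y).sub ((hasDerivAt_pow 3 y).div_const 6)).add
          ((hasDerivAt_pow 5 y).div_const 120)).sub (Real.hasDerivAt_sin y)
      refine h'.congr_deriv ?_
      push_cast; ring
    ) (by norm_num) (fun y hy => by linarith [cos_le_t4' hy]) hx
  linarith [h]

lemma cos_ge_t6' {x : ℝ} (hx : 0 ≤ x) : 1 - x^2/2 + x^4/24 - x^6/720 ≤ cos x := by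
  have h := nonneg_of_deriv' (f := fun x => cos x - (1 - x^2/2 + x^4/24 - x^6/720))
    (f' := fun x => -sin x - (-x + x^3/6 - x^5/120)) (fun y => by
      have h' := (Real.hasDerivAt_cos y).sub ((((hasDerivAt_const y (1:ℝ)).sub
          ((hasDerivAt_pow 2 y).div_const 2)).add ((hasDerivAt_pow 4 y).div_const 24)).sub
          ((hasDerivAt_pow 6 y).div_const 720))
      refine h'.congr_deriv ?_
      push_cast; ring
    ) (by norm_num) (fun y hy => by linarith [sin_le_t5' hy]) hx
  linarith [h]

lemma sin_ge_t7' {x : ℝ} (hx : 0 ≤ x) : x - x^3/6 + x^5/120 - x^7/5040 ≤ sin x := by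
  have h := nonneg_of_deriv' (f := fun x => sin x - (x - x^3/6 + x^5/120 - x^7/5040))
    (f' := fun x => cos x - (1 - x^2/2 + x^4/24 - x^6/720)) (fun y => by
      have h' := (Real.hasDerivAt_sin y).sub ((((hasDerivAt_id y).sub
          ((hasDerivAt_pow 3 y).div_const 6)).add ((hasDerivAt_pow 5 y).div_const 120)).sub
          ((hasDerivAt_pow 7 y).div_const 5040))
      refine h'.congr_deriv ?_
      push_cast; ring
    ) (by norm_num) (fun y hy => by linarith [cos_ge_t6' hy]) hx
  linarith [h]

lemma R_core' (t : ℝ) (h0 : 0 < t) (h2 : t ≤ 2) :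
    0 < 1 - π^2/12 - t^2/6 + t^2*π^2/180 + t^3*π/90 + t^4/120 - t^4*π^2/5040
      - 29*t^5*π/30240 - t^6/5040 + t^7*π/25200 - t^9*π/1814400 := by
  have hp1 : (3.141592:ℝ) < π := pi_gt_d6
  have hp2 : π < 3.141593 := pi_lt_d6
  have ht : (0:ℝ) ≤ t := h0.le
  have h2' : (0:ℝ) ≤ 2 - t := by linarith
  have hsq1 : (0:ℝ) ≤ π^2 - 3.141592^2 := by nlinarith
  have hsq2 : (0:ℝ) ≤ 3.141593^2 - π^2 := by nlinarith
  have hRnum : (0:ℝ) < 1 - (3.141593:ℝ)^2/12 - t^2/6 + t^2*3.141592^2/180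
      + t^3*3.141592/90 + t^4/120 - t^4*3.141593^2/5040 - 29*t^5*3.141593/30240
      - t^6/5040 + t^7*3.141592/25200 - t^9*3.141593/1814400 := by
    nlinarith [mul_nonneg (pow_nonneg ht 0) (pow_nonneg h2' 9),
      mul_nonneg (pow_nonneg ht 1) (pow_nonneg h2' 8),
      mul_nonneg (pow_nonneg ht 2) (pow_nonneg h2' 7),
      mul_nonneg (pow_nonneg ht 3) (pow_nonneg h2' 6),
      mul_nonneg (pow_nonneg ht 4) (pow_nonneg h2' 5),
      mul_nonneg (pow_nonneg ht 5) (pow_nonneg h2' 4),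
      mul_nonneg (pow_nonneg ht 6) (pow_nonneg h2' 3),
      mul_nonneg (pow_nonneg ht 7) (pow_nonneg h2' 2),
      mul_nonneg (pow_nonneg ht 8) (pow_nonneg h2' 1),
      mul_nonneg (pow_nonneg ht 9) (pow_nonneg h2' 0)]
  nlinarith [hRnum, mul_nonneg (pow_nonneg ht 2) hsq1, mul_nonneg (pow_nonneg ht 4) hsq2,
    mul_nonneg (pow_nonneg ht 3) (sub_nonneg.2 hp1.le),
    mul_nonneg (pow_nonneg ht 5) (sub_nonneg.2 hp2.le),
    mul_nonneg (pow_nonneg ht 7) (sub_nonneg.2 hp1.le),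
    mul_nonneg (pow_nonneg ht 9) (sub_nonneg.2 hp2.le)]

lemma S_core' (y : ℝ) (h0 : 0 < y) (h2 : y ≤ π - 2) :
    0 < π/3 - y + y^3/6 - π*y^4/72 := by
  have hp1 : (3.141592:ℝ) < π := pi_gt_d6
  have hp2 : π < 3.141593 := pi_lt_d6
  have ht : (0:ℝ) ≤ y := h0.le
  have h2' : (0:ℝ) ≤ 3.141593 - 2 - y := by linarith
  nlinarith [mul_nonneg (pow_nonneg ht 0) (pow_nonneg h2' 4),
    mul_nonneg (pow_nonneg ht 1) (pow_nonneg h2' 3),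
    mul_nonneg (pow_nonneg ht 2) (pow_nonneg h2' 2),
    mul_nonneg (pow_nonneg ht 3) (pow_nonneg h2' 1),
    mul_nonneg (pow_nonneg ht 4) (pow_nonneg h2' 0),
    mul_nonneg (pow_nonneg ht 4) (sub_nonneg.2 hp2.le)]

lemma H_pos' {t : ℝ} (h0 : 0 < t) (hπ : t < π) :
    0 < (π - t)^2 * t * Real.sin t + 2*π*(t + Real.sin t - π)*(1 - Real.cos t) := by
  have hp1 : (3.141592:ℝ) < π := pi_gt_d6
  rcases le_or_gt t 2 with h2 | h2
  · -- region 1 : 0 < t ≤ 2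
    have hs7 := sin_ge_t7' h0.le
    have hc6 := cos_ge_t6' h0.le
    have hc1 : Real.cos t ≤ 1 := Real.cos_le_one t
    have hs1 : Real.sin t ≤ 1 := Real.sin_le_one t
    have hslnn : 0 ≤ π - t - (t - t^3/6 + t^5/120 - t^7/5040) := by
      have ht : (0:ℝ) ≤ t := h0.le
      have h2' : (0:ℝ) ≤ 2 - t := by linarith
      nlinarith [mul_nonneg (pow_nonneg ht 0) (pow_nonneg h2' 7),
        mul_nonneg (pow_nonneg ht 1) (pow_nonneg h2' 6),
        mul_nonneg (pow_nonneg ht 2) (pow_nonneg h2' 5),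
        mul_nonneg (pow_nonneg ht 3) (pow_nonneg h2' 4),
        mul_nonneg (pow_nonneg ht 4) (pow_nonneg h2' 3),
        mul_nonneg (pow_nonneg ht 5) (pow_nonneg h2' 2),
        mul_nonneg (pow_nonneg ht 6) (pow_nonneg h2' 1),
        mul_nonneg (pow_nonneg ht 7) (pow_nonneg h2' 0)]
    have hcu_nn : 0 ≤ 1 - Real.cos t := by linarith
    have step1 : (π - t - Real.sin t)*(1 - Real.cos t)
        ≤ (π - t - (t - t^3/6 + t^5/120 - t^7/5040))*(t^2/2 - t^4/24 + t^6/720) :=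
      mul_le_mul (by linarith) (by linarith) hcu_nn hslnn
    have step1' := mul_le_mul_of_nonneg_left step1 (by positivity : (0:ℝ) ≤ 2*π)
    have hcnn : (0:ℝ) ≤ (π - t)^2 * t := by positivity
    have step2 : (π-t)^2*t*(t - t^3/6 + t^5/120 - t^7/5040) ≤ (π-t)^2*t*Real.sin t :=
      mul_le_mul_of_nonneg_left hs7 hcnn
    have hR := R_core' t h0 h2
    have hfac : (π-t)^2*t*(t - t^3/6 + t^5/120 - t^7/5040)
        - 2*π*(π - t - (t - t^3/6 + t^5/120 - t^7/5040))*(t^2/2 - t^4/24 + t^6/720)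
        = t^4 * (1 - π^2/12 - t^2/6 + t^2*π^2/180 + t^3*π/90 + t^4/120 - t^4*π^2/5040
          - 29*t^5*π/30240 - t^6/5040 + t^7*π/25200 - t^9*π/1814400) := by ring
    nlinarith [step1', step2, hfac, mul_pos (pow_pos h0 4) hR]
  · -- region 2 : 2 < t < π
    set y := π - t with hy
    clear_value y
    have hy0 : 0 < y := by simp only [hy]; linarith
    have hy2 : y ≤ π - 2 := by simp only [hy]; linarith
    have hs3 := sin_ge_t3' hy0.le
    have hsle := Real.sin_le hy0.le
    have hc4 := cos_le_t4' hy0.le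
    have hcge : (-1:ℝ) ≤ Real.cos y := Real.neg_one_le_cos y
    have hsin_t : Real.sin t = Real.sin y := by
      rw [show t = π - y by rw [hy]; ring, Real.sin_pi_sub]
    have hcos_t : Real.cos t = -Real.cos y := by
      rw [show t = π - y by rw [hy]; ring, Real.cos_pi_sub]
    have step1 : (y - Real.sin y)*(1 + Real.cos y) ≤ (y^3/6)*(2 - y^2/2 + y^4/24) := by
      apply mul_le_mul (by linarith) (by linarith) (by linarith)
      positivity
    have step1' := mul_le_mul_of_nonneg_left step1 (by positivity : (0:ℝ) ≤ 2*π)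
    have hπy : 0 < π - y := by simp only [hy]; linarith
    have hcnn : (0:ℝ) ≤ y^2 * (π - y) := by positivity
    have step2 : y^2*(π-y)*(y - y^3/6) ≤ y^2*(π-y)*Real.sin y :=
      mul_le_mul_of_nonneg_left hs3 hcnn
    have hS := S_core' y hy0 hy2
    have hfac : y^2*(π-y)*(y - y^3/6) - 2*π*(y^3/6)*(2 - y^2/2 + y^4/24)
        = y^3*(π/3 - y + y^3/6 - π*y^4/72) := by ring
    have hty : t = π - y := by rw [hy]; ring
    rw [hsin_t, hcos_t, hty]
    nlinarith [step1', step2, hfac, mul_pos (pow_pos hy0 3) hS]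

theorem stmt_17 (s : ℝ) (hs : 2 < s) :
    ∀ t₂ ∈ Set.Ioo (0 : ℝ) ((s - 2) * π / s), t₂ < (s - 1) * π / (s + 1) →
      deriv (fun t : ℝ =>
        (2 * (t ^ 2 * (1 + s) - (s - 1) * π ^ 2) * Real.cot (t / 2) +
          t * (t - π) * (t * (1 + s) + π * (1 - s)) * (1 / Real.sin (t / 2)) ^ 2) /
            (t - π) ^ 2) t₂ < 0 := by
  intro t₂ ht₂ hlt
  obtain ⟨h0, hub⟩ := ht₂
  have hπpos : 0 < π := pi_pos
  have hs0 : 0 < s := by linarith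
  have hπt : t₂ < π := by
    have : (s - 2) * π / s < π := by
      rw [div_lt_iff₀ hs0]
      nlinarith
    linarith
  have hσpos : 0 < Real.sin (t₂/2) := by
    apply Real.sin_pos_of_pos_of_lt_pi <;> [linarith; linarith [pi_gt_three]]
  have hσne : Real.sin (t₂/2) ≠ 0 := ne_of_gt hσpos
  have htπne : t₂ - π ≠ 0 := by intro h; linarith [sub_eq_zero.1 h]
  -- rewrite the function in a division-friendly form
  have hfun : (fun t : ℝ =>
      (2 * (t ^ 2 * (1 + s) - (s - 1) * π ^ 2) * Real.cot (t / 2) +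
        t * (t - π) * (t * (1 + s) + π * (1 - s)) * (1 / Real.sin (t / 2)) ^ 2) /
          (t - π) ^ 2)
      = (fun t : ℝ =>
      (2 * (t ^ 2 * (1 + s) - (s - 1) * π ^ 2) * (Real.cos (t / 2) * Real.sin (t / 2)) +
        t * (t - π) * (t * (1 + s) + π * (1 - s))) / ((t - π) ^ 2 * Real.sin (t / 2) ^ 2)) := by
    funext x
    rw [Real.cot_eq_cos_div_sin]
    rcases eq_or_ne (Real.sin (x/2)) 0 with h | h
    · simp [h]
    · rcases eq_or_ne (x - π) 0 with h2 | h2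
      · simp [h2]
      · field_simp
  rw [hfun]
  -- derivative pieces
  have h2 : HasDerivAt (fun t : ℝ => t/2) (1/2) t₂ := (hasDerivAt_id t₂).div_const 2
  have hσ : HasDerivAt (fun t : ℝ => Real.sin (t/2)) (Real.cos (t₂/2) * (1/2)) t₂ :=
    h2.sin
  have hγ : HasDerivAt (fun t : ℝ => Real.cos (t/2)) (-Real.sin (t₂/2) * (1/2)) t₂ :=
    h2.cos
  have hA : HasDerivAt (fun t : ℝ => t ^ 2 * (1 + s) - (s - 1) * π ^ 2)
      (2*t₂*(1+s)) t₂ := by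
    have h' := ((hasDerivAt_pow 2 t₂).mul_const (1+s)).sub_const ((s-1)*π^2)
    refine h'.congr_deriv ?_
    push_cast; ring
  have hB : HasDerivAt (fun t : ℝ => t * (t - π) * (t * (1 + s) + π * (1 - s)))
      ((t₂-π)*(t₂*(1+s)+π*(1-s)) + t₂*(t₂*(1+s)+π*(1-s)) + t₂*(t₂-π)*(1+s)) t₂ := by
    have h' := ((hasDerivAt_id' (x := t₂)).mul ((hasDerivAt_id' (x := t₂)).sub_const π)).mul
      (((hasDerivAt_id' (x := t₂)).mul_const (1+s)).add_const (π*(1-s)))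
    refine h'.congr_deriv ?_
    simp only [Pi.mul_apply]
    ring
  have hN := ((hA.const_mul 2).mul (hγ.mul hσ)).add hB
  have hD := (((hasDerivAt_id' (x := t₂)).sub_const π).pow 2).mul (hσ.pow 2)
  have hDne : (t₂ - π) ^ 2 * Real.sin (t₂/2) ^ 2 ≠ 0 := by positivity
  have hf := hN.div hD hDne
  have hpyth : Real.sin (t₂/2)^2 + Real.cos (t₂/2)^2 = 1 := Real.sin_sq_add_cos_sq _
  -- the key factorized form of the derivative
  have hf' : HasDerivAt (fun t : ℝ =>
      (2 * (t ^ 2 * (1 + s) - (s - 1) * π ^ 2) * (Real.cos (t / 2) * Real.sin (t / 2)) +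
        t * (t - π) * (t * (1 + s) + π * (1 - s))) / ((t - π) ^ 2 * Real.sin (t / 2) ^ 2))
      (-(((s-1)*π - (1+s)*t₂) *
          ((π-t₂)^2*t₂*(Real.sin (t₂/2)*Real.cos (t₂/2)) +
            2*π*(t₂ + 2*(Real.sin (t₂/2)*Real.cos (t₂/2)) - π)*Real.sin (t₂/2)^2) *
          (π-t₂)) / ((t₂-π)^2*Real.sin (t₂/2)^2)^2) t₂ := by
    refine hf.congr_deriv ?_
    symm
    simp only [Pi.mul_apply, Pi.add_apply, Pi.pow_apply]
    push_cast
    linear_combination (-(Real.sin (t₂/2)^2 * ((s-1)*π^4 - 2*(s-1)*t₂*π^3 - 2*t₂^2*π^2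
      + 2*(1+s)*t₂^3*π - (1+s)*t₂^4)) / ((t₂-π)^2*Real.sin (t₂/2)^2)^2) * hpyth
  rw [hf'.deriv]
  -- positivity of all factors
  have hK : 0 < (s-1)*π - (1+s)*t₂ := by
    have hs1 : 0 < s + 1 := by linarith
    rw [lt_div_iff₀ hs1] at hlt
    nlinarith
  have hsin2 : Real.sin t₂ = 2*(Real.sin (t₂/2)*Real.cos (t₂/2)) := by
    have h := Real.sin_two_mul (t₂/2)
    rw [show 2*(t₂/2) = t₂ by ring] at h
    rw [h]; ring
  have hcos2 : Real.cos t₂ = 1 - 2*Real.sin (t₂/2)^2 := by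
    have h := Real.cos_two_mul (t₂/2)
    rw [show 2*(t₂/2) = t₂ by ring] at h
    rw [h]; linear_combination 2*hpyth
  have hH := H_pos' h0 hπt
  rw [hsin2, hcos2] at hH
  have hBr : 0 < (π-t₂)^2*t₂*(Real.sin (t₂/2)*Real.cos (t₂/2)) +
      2*π*(t₂ + 2*(Real.sin (t₂/2)*Real.cos (t₂/2)) - π)*Real.sin (t₂/2)^2 := by
    nlinarith [hH]
  apply div_neg_of_neg_of_pos
  · have := mul_pos (mul_pos hK hBr) (by linarith : (0:ℝ) < π - t₂)
    linarith
  · positivity
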